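/- Let X be a Banach space and S = (X_k)_{k≥1} a system of closed subspaces with Θ*_S(x) < ∞ for every x ∈ X. Then Θ*_S is a norm on X equivalent to the original norm. -/

import Mathlib

open Filter Finset
open scoped ENNReal

variable {E : Type*} [NormedAddCommGroup E] [NormedSpace ℝ E]

/-- For a finite tuple `P = (x_0, …, x_{n-1})` with `x_k ∈ X_k`,
`Θ_S(P) = max_k ‖x_0 + ⋯ + x_k‖` (as an extended nonnegative real). -/
noncomputable def ThetaP (n : ℕ) (f : ℕ → E) : ℝ≥0∞ :=
  (Finset.range n).sup fun k => ENNReal.ofReal ‖∑ j ∈ Finset.range (k + 1), f j‖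

/-- `Θ_S(x, ε) = inf {Θ_S(P) : ‖Σ(P) − x‖ ≤ ε}` (infimum over the empty set is `∞`). -/
noncomputable def Theta (X : ℕ → Submodule ℝ E) (x : E) (ε : ℝ) : ℝ≥0∞ :=
  ⨅ p : {p : ℕ × (ℕ → E) // (∀ k < p.1, p.2 k ∈ X k) ∧
      ‖(∑ j ∈ Finset.range p.1, p.2 j) - x‖ ≤ ε}, ThetaP p.1.1 p.1.2

/-- `Θ*_S(x) = sup_{ε > 0} Θ_S(x, ε) = lim_{ε → 0+} Θ_S(x, ε)`. -/
noncomputable def ThetaStar (X : ℕ → Submodule ℝ E) (x : E) : ℝ≥0∞ :=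
  ⨆ ε : {ε : ℝ // 0 < ε}, Theta X x ε



lemma theta_le_thetaP (X : ℕ → Submodule ℝ E) (x : E) (ε : ℝ) (n : ℕ) (f : ℕ → E)
    (hm : ∀ k < n, f k ∈ X k) (he : ‖(∑ j ∈ Finset.range n, f j) - x‖ ≤ ε) :
    Theta X x ε ≤ ThetaP n f :=
  iInf_le (fun p : {p : ℕ × (ℕ → E) // (∀ k < p.1, p.2 k ∈ X k) ∧
      ‖(∑ j ∈ Finset.range p.1, p.2 j) - x‖ ≤ ε} => ThetaP p.1.1 p.1.2) ⟨(n, f), hm, he⟩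

lemma theta_le_thetaStar (X : ℕ → Submodule ℝ E) (x : E) {ε : ℝ} (hε : 0 < ε) :
    Theta X x ε ≤ ThetaStar X x :=
  le_iSup (fun ε : {ε : ℝ // 0 < ε} => Theta X x ε) ⟨ε, hε⟩

lemma theta_eq_zero (X : ℕ → Submodule ℝ E) {x : E} {ε : ℝ} (h : ‖x‖ ≤ ε) :
    Theta X x ε = 0 := by
  refine le_antisymm ?_ zero_le
  have := theta_le_thetaP X x ε 0 0 (by simp) (by simpa using h)
  simpa [ThetaP] using this

lemma thetaStar_zero (X : ℕ → Submodule ℝ E) : ThetaStar X (0 : E) = 0 := by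
  refine le_antisymm (iSup_le fun ε => ?_) zero_le
  rw [theta_eq_zero X (by simpa using ε.2.le)]

lemma ofReal_sub_le_theta (X : ℕ → Submodule ℝ E) (x : E) (ε : ℝ) :
    ENNReal.ofReal (‖x‖ - ε) ≤ Theta X x ε := by
  refine le_iInf fun ⟨⟨n, f⟩, hm, he⟩ => ?_
  rcases Nat.eq_zero_or_pos n with h | h
  · subst h
    simp only [Finset.range_zero, Finset.sum_empty, zero_sub, norm_neg] at he
    have h0 : ENNReal.ofReal (‖x‖ - ε) = 0 := ENNReal.ofReal_eq_zero.2 (by linarith)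
    simp [h0]
  · have h1 : ENNReal.ofReal ‖∑ j ∈ Finset.range n, f j‖ ≤ ThetaP n f := by
      have hmem : n - 1 ∈ Finset.range n := Finset.mem_range.2 (by omega)
      have := Finset.le_sup (f := fun k => ENNReal.ofReal ‖∑ j ∈ Finset.range (k + 1), f j‖) hmem
      simpa [Nat.sub_add_cancel h, ThetaP] using this
    refine le_trans (ENNReal.ofReal_le_ofReal ?_) h1
    have h2 := norm_sub_norm_le x (∑ j ∈ Finset.range n, f j)
    rw [norm_sub_rev] at h2
    simp only at he
    linarith

lemma theta_translate (X : ℕ → Submodule ℝ E) {x y : E} {ε δ : ℝ} (h : ‖x - y‖ ≤ δ) :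
    Theta X x (ε + δ) ≤ Theta X y ε := by
  refine le_iInf fun ⟨⟨n, f⟩, hm, he⟩ => ?_
  refine theta_le_thetaP X x _ n f hm ?_
  calc ‖(∑ j ∈ Finset.range n, f j) - x‖
      ≤ ‖(∑ j ∈ Finset.range n, f j) - y‖ + ‖y - x‖ := by
        simpa using norm_sub_le_norm_sub_add_norm_sub _ y x
    _ ≤ ε + δ := by rw [← norm_neg (y - x)] at *; simp only [neg_sub] at *; linarith

lemma sum_trunc (n m : ℕ) (f : ℕ → E) :
    ∑ j ∈ Finset.range m, (if j < n then f j else 0) = ∑ j ∈ Finset.range (min m n), f j := by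
  rw [← Finset.sum_filter]
  congr 1
  ext j
  simp [Finset.mem_filter, Nat.lt_min, and_comm]

lemma thetaP_trunc_le (n m : ℕ) (f : ℕ → E) (k : ℕ) :
    ENNReal.ofReal ‖∑ j ∈ Finset.range (k + 1), (if j < n then f j else 0)‖ ≤ ThetaP n f := by
  rw [sum_trunc]
  rcases Nat.eq_zero_or_pos n with h | h
  · simp [h]
  · have hmin : min (k + 1) n = min k (n - 1) + 1 := by omega
    rw [hmin]
    exact Finset.le_sup (f := fun k => ENNReal.ofReal ‖∑ j ∈ Finset.range (k + 1), f j‖)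
      (Finset.mem_range.2 (by omega))

def Adm (X : ℕ → Submodule ℝ E) (x : E) (ε : ℝ) : Type _ :=
  {p : ℕ × (ℕ → E) // (∀ k < p.1, p.2 k ∈ X k) ∧
      ‖(∑ j ∈ Finset.range p.1, p.2 j) - x‖ ≤ ε}

lemma theta_eq (X : ℕ → Submodule ℝ E) (x : E) (ε : ℝ) :
    Theta X x ε = ⨅ p : Adm X x ε, ThetaP p.1.1 p.1.2 := rfl

lemma theta_add_le (X : ℕ → Submodule ℝ E) (x y : E) (ε₁ ε₂ : ℝ) :
    Theta X (x + y) (ε₁ + ε₂) ≤ Theta X x ε₁ + Theta X y ε₂ := by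
  have h1 : Theta X x ε₁ + Theta X y ε₂
      = ⨅ p : Adm X x ε₁, (ThetaP p.1.1 p.1.2 + Theta X y ε₂) := by
    rw [theta_eq X x ε₁]; exact ENNReal.iInf_add
  rw [h1]
  refine le_iInf fun ⟨⟨n, f⟩, hmf, hef⟩ => ?_
  have h2 : ThetaP n f + Theta X y ε₂
      = ⨅ q : Adm X y ε₂, (ThetaP n f + ThetaP q.1.1 q.1.2) := by
    rw [theta_eq X y ε₂]; exact ENNReal.add_iInf
  simp only at hmf hef ⊢
  rw [h2]
  refine le_iInf fun ⟨⟨m, g⟩, hmg, heg⟩ => ?_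
  simp only at hmg heg ⊢
  have hsplit : ∀ N : ℕ, ∑ j ∈ Finset.range N, ((if j < n then f j else 0) + (if j < m then g j else 0))
      = (∑ j ∈ Finset.range (min N n), f j) + ∑ j ∈ Finset.range (min N m), g j := by
    intro N
    rw [Finset.sum_add_distrib, sum_trunc, sum_trunc]
  have key : Theta X (x + y) (ε₁ + ε₂)
      ≤ ThetaP (max n m) (fun j => (if j < n then f j else 0) + (if j < m then g j else 0)) := by
    refine theta_le_thetaP X _ _ _ _ ?_ ?_
    · intro k _
      refine Submodule.add_mem _ ?_ ?_
      · by_cases hk : k < n <;> simp [hk, hmf k, Submodule.zero_mem]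
      · by_cases hk : k < m <;> simp [hk, hmg k, Submodule.zero_mem]
    · rw [hsplit, min_eq_right (le_max_left n m), min_eq_right (le_max_right n m)]
      calc ‖(∑ j ∈ Finset.range n, f j) + (∑ j ∈ Finset.range m, g j) - (x + y)‖
          = ‖((∑ j ∈ Finset.range n, f j) - x) + ((∑ j ∈ Finset.range m, g j) - y)‖ := by
            congr 1; abel
        _ ≤ _ := le_trans (norm_add_le _ _) (add_le_add hef heg)
  refine key.trans ?_
  refine Finset.sup_le fun k _ => ?_
  rw [hsplit]
  calc ENNReal.ofReal ‖(∑ j ∈ Finset.range (min (k+1) n), f j) + ∑ j ∈ Finset.range (min (k+1) m), g j‖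
      ≤ ENNReal.ofReal (‖∑ j ∈ Finset.range (min (k+1) n), f j‖ + ‖∑ j ∈ Finset.range (min (k+1) m), g j‖) :=
        ENNReal.ofReal_le_ofReal (norm_add_le _ _)
    _ ≤ ENNReal.ofReal ‖∑ j ∈ Finset.range (min (k+1) n), f j‖
        + ENNReal.ofReal ‖∑ j ∈ Finset.range (min (k+1) m), g j‖ := ENNReal.ofReal_add_le
    _ ≤ ThetaP n f + ThetaP m g := by
        refine add_le_add ?_ ?_
        · have := thetaP_trunc_le n (max n m) f k
          rwa [sum_trunc] at this
        · have := thetaP_trunc_le m (max n m) g k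
          rwa [sum_trunc] at this

lemma thetaStar_add_le (X : ℕ → Submodule ℝ E) (x y : E) :
    ThetaStar X (x + y) ≤ ThetaStar X x + ThetaStar X y := by
  refine iSup_le fun ⟨ε, hε⟩ => ?_
  have : Theta X (x + y) ε = Theta X (x + y) (ε / 2 + ε / 2) := by norm_num
  rw [this]
  exact le_trans (theta_add_le X x y _ _)
    (add_le_add (theta_le_thetaStar X x (by linarith)) (theta_le_thetaStar X y (by linarith)))

lemma thetaP_smul_le (a : ℝ) (n : ℕ) (f : ℕ → E) :
    ThetaP n (fun j => a • f j) ≤ ENNReal.ofReal |a| * ThetaP n f := by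
  refine Finset.sup_le fun k hk => ?_
  have h : ∑ j ∈ Finset.range (k + 1), a • f j = a • ∑ j ∈ Finset.range (k + 1), f j :=
    (Finset.smul_sum).symm
  rw [h, norm_smul, Real.norm_eq_abs, ENNReal.ofReal_mul (abs_nonneg a)]
  exact mul_le_mul_right
    (Finset.le_sup (f := fun k => ENNReal.ofReal ‖∑ j ∈ Finset.range (k + 1), f j‖) hk) _

lemma theta_smul_le (X : ℕ → Submodule ℝ E) {a : ℝ} (ha : a ≠ 0) (x : E) (ε : ℝ) :
    Theta X (a • x) (|a| * ε) ≤ ENNReal.ofReal |a| * Theta X x ε := by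
  rw [theta_eq X x ε, ENNReal.mul_iInf_of_ne (by simpa using abs_pos.2 ha) ENNReal.ofReal_ne_top]
  refine le_iInf fun ⟨⟨n, f⟩, hm, he⟩ => ?_
  simp only at hm he ⊢
  refine le_trans (theta_le_thetaP X _ _ n (fun j => a • f j) ?_ ?_) (thetaP_smul_le a n f)
  · intro k hk; exact Submodule.smul_mem _ _ (hm k hk)
  · have h : ∑ j ∈ Finset.range n, a • f j = a • ∑ j ∈ Finset.range n, f j :=
      (Finset.smul_sum).symm
    rw [h, ← smul_sub, norm_smul, Real.norm_eq_abs]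
    exact mul_le_mul_of_nonneg_left he (abs_nonneg a)

lemma thetaStar_smul_le (X : ℕ → Submodule ℝ E) {a : ℝ} (ha : a ≠ 0) (x : E) :
    ThetaStar X (a • x) ≤ ENNReal.ofReal |a| * ThetaStar X x := by
  refine iSup_le fun ⟨ε, hε⟩ => ?_
  have habs : (0:ℝ) < |a| := abs_pos.2 ha
  have h1 : Theta X (a • x) ε = Theta X (a • x) (|a| * (ε / |a|)) := by
    rw [mul_div_cancel₀ _ (ne_of_gt habs)]
  rw [h1]
  exact le_trans (theta_smul_le X ha x _)
    (mul_le_mul_right (theta_le_thetaStar X x (div_pos hε habs)) _)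

lemma thetaStar_smul (X : ℕ → Submodule ℝ E) (a : ℝ) (x : E) :
    ThetaStar X (a • x) = ENNReal.ofReal |a| * ThetaStar X x := by
  rcases eq_or_ne a 0 with rfl | ha
  · simp [thetaStar_zero]
  · refine le_antisymm (thetaStar_smul_le X ha x) ?_
    have h2 := thetaStar_smul_le X (inv_ne_zero ha) (a • x)
    rw [inv_smul_smul₀ ha] at h2
    calc ENNReal.ofReal |a| * ThetaStar X x
        ≤ ENNReal.ofReal |a| * (ENNReal.ofReal |a⁻¹| * ThetaStar X (a • x)) :=
          mul_le_mul_right h2 _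
      _ = ThetaStar X (a • x) := by
          rw [← mul_assoc, ← ENNReal.ofReal_mul (abs_nonneg a), abs_inv,
            mul_inv_cancel₀ (abs_ne_zero.2 ha)]
          simp

lemma isClosed_sublevel (X : ℕ → Submodule ℝ E) (t : ℝ≥0∞) :
    IsClosed {x : E | ThetaStar X x ≤ t} := by
  refine isClosed_of_closure_subset fun x hx => ?_
  show ThetaStar X x ≤ t
  refine iSup_le fun ⟨ε, hε⟩ => ?_
  obtain ⟨y, hy, hxy⟩ := Metric.mem_closure_iff.1 hx (ε / 2) (by linarith)
  have h1 : Theta X x ε ≤ Theta X y (ε / 2) := by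
    have := theta_translate X (x := x) (y := y) (ε := ε / 2) (δ := ε / 2)
      (by rw [← dist_eq_norm]; exact hxy.le)
    rwa [add_halves] at this
  exact h1.trans ((theta_le_thetaStar X y (by linarith)).trans hy)

lemma ofReal_norm_le_thetaStar (X : ℕ → Submodule ℝ E) (x : E) :
    ENNReal.ofReal ‖x‖ ≤ ThetaStar X x := by
  refine ENNReal.le_of_forall_pos_le_add fun ε hε _ => ?_
  calc ENNReal.ofReal ‖x‖ = ENNReal.ofReal ((‖x‖ - ε) + ε) := by ring_nf
    _ ≤ ENNReal.ofReal (‖x‖ - ε) + ENNReal.ofReal ε := ENNReal.ofReal_add_le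
    _ ≤ ThetaStar X x + ε := by
        refine add_le_add ((ofReal_sub_le_theta X x ε).trans
          (theta_le_thetaStar X x (by exact_mod_cast hε))) ?_
        rw [ENNReal.ofReal_coe_nnreal]

lemma exists_upper_bound [CompleteSpace E] (X : ℕ → Submodule ℝ E)
    (hfin : ∀ x : E, ThetaStar X x ≠ ⊤) :
    ∃ C : ℝ, 0 < C ∧ ∀ x : E, ThetaStar X x ≤ ENNReal.ofReal (C * ‖x‖) := by
  have hU : ⋃ n : ℕ, {x : E | ThetaStar X x ≤ n} = Set.univ := by
    ext x
    simp only [Set.mem_iUnion, Set.mem_setOf_eq, Set.mem_univ, iff_true]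
    obtain ⟨n, hn⟩ := ENNReal.exists_nat_gt (hfin x)
    exact ⟨n, hn.le⟩
  obtain ⟨n, hn⟩ := nonempty_interior_of_iUnion_of_closed
    (f := fun n : ℕ => {x : E | ThetaStar X x ≤ n})
    (fun n => isClosed_sublevel X n) hU
  obtain ⟨x₀, hx₀⟩ := hn
  obtain ⟨r, hr, hball⟩ := Metric.isOpen_iff.1 isOpen_interior x₀ hx₀
  have hx₀' : ThetaStar X x₀ ≤ n :=
    (interior_subset hx₀ : x₀ ∈ {x : E | ThetaStar X x ≤ (n : ℝ≥0∞)})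
  have hz : ∀ z : E, ‖z‖ < r → ThetaStar X z ≤ (n : ℝ≥0∞) + n := by
    intro z hzr
    have h1 : ThetaStar X (x₀ + z) ≤ n := by
      have hmem : x₀ + z ∈ Metric.ball x₀ r := by
        rw [Metric.mem_ball, dist_eq_norm]
        simpa using hzr
      exact (interior_subset (hball hmem) : x₀ + z ∈ {x : E | ThetaStar X x ≤ (n : ℝ≥0∞)})
    have h2 : ThetaStar X (-x₀) ≤ n := by
      have h := thetaStar_smul X (-1) x₀
      simp only [neg_smul, one_smul, abs_neg, abs_one, ENNReal.ofReal_one, one_mul] at h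
      rw [h]; exact hx₀'
    calc ThetaStar X z = ThetaStar X ((x₀ + z) + (-x₀)) := by congr 1; abel
      _ ≤ _ := le_trans (thetaStar_add_le X _ _) (add_le_add h1 h2)
  refine ⟨(2 * n + 2) * (2 / r), by positivity, fun x => ?_⟩
  rcases eq_or_ne x 0 with rfl | hx
  · simp [thetaStar_zero]
  · have hxn : 0 < ‖x‖ := norm_pos_iff.2 hx
    set a : ℝ := r / (2 * ‖x‖) with hadef
    have hapos : 0 < a := by positivity
    have ha : a ≠ 0 := ne_of_gt hapos
    have hz1 : ‖a • x‖ < r := by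
      rw [norm_smul, Real.norm_eq_abs, abs_of_pos hapos, hadef]
      rw [div_mul_eq_mul_div, mul_comm]
      rw [div_lt_iff₀ (by positivity)]
      nlinarith
    have heq := thetaStar_smul X a⁻¹ (a • x)
    rw [inv_smul_smul₀ ha] at heq
    have hnn : (n : ℝ≥0∞) + n ≤ ENNReal.ofReal (2 * n + 2) := by
      rw [← ENNReal.ofReal_natCast n, ← ENNReal.ofReal_add (by positivity) (by positivity)]
      exact ENNReal.ofReal_le_ofReal (by push_cast; linarith)
    calc ThetaStar X x = ENNReal.ofReal |a⁻¹| * ThetaStar X (a • x) := heq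
      _ ≤ ENNReal.ofReal |a⁻¹| * ENNReal.ofReal (2 * n + 2) :=
          mul_le_mul_right ((hz _ hz1).trans hnn) _
      _ = ENNReal.ofReal (|a⁻¹| * (2 * n + 2)) := (ENNReal.ofReal_mul (abs_nonneg _)).symm
      _ ≤ ENNReal.ofReal ((2 * n + 2) * (2 / r) * ‖x‖) := by
          refine ENNReal.ofReal_le_ofReal (le_of_eq ?_)
          rw [abs_inv, abs_of_pos hapos, hadef]
          field_simp

/-- If `Θ*_S(x) < ∞` for every `x`, then `Θ*_S` is a norm on `X` equivalent to the
original norm: it is subadditive, absolutely homogeneous, vanishes exactly at `0`, and is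
two-sidedly comparable to `‖·‖`. -/
theorem thetaStar_is_equivalent_norm [CompleteSpace E] (X : ℕ → Submodule ℝ E)
    (hX : ∀ k, IsClosed (X k : Set E)) (hfin : ∀ x : E, ThetaStar X x ≠ ⊤) :
    (∀ x y : E, ThetaStar X (x + y) ≤ ThetaStar X x + ThetaStar X y) ∧
    (∀ (a : ℝ) (x : E), ThetaStar X (a • x) = ENNReal.ofReal |a| * ThetaStar X x) ∧
    (∀ x : E, ThetaStar X x = 0 ↔ x = 0) ∧
    (∃ c C : ℝ, 0 < c ∧ 0 < C ∧ ∀ x : E,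
      ENNReal.ofReal (c * ‖x‖) ≤ ThetaStar X x ∧
      ThetaStar X x ≤ ENNReal.ofReal (C * ‖x‖)) := by

  obtain ⟨C, hC, hub⟩ := exists_upper_bound X hfin
  refine ⟨thetaStar_add_le X, thetaStar_smul X, fun x => ?_, 1, C, one_pos, hC, fun x => ?_⟩
  · constructor
    · intro h
      have h1 := ofReal_norm_le_thetaStar X x
      rw [h, le_zero_iff, ENNReal.ofReal_eq_zero] at h1
      exact norm_le_zero_iff.1 h1
    · rintro rfl; exact thetaStar_zero X
  · exact ⟨by simpa using ofReal_norm_le_thetaStar X x, hub x⟩
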